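/- Let c : S¹ → S¹ be the antipodal involution and let V_± → S¹ × S¹ be the real bundle pairs over (S¹ × S¹, id × c) given by (I × S¹ × ℂ)/∼ with (0,z,v) ∼ (1,z,±v) and conjugation induced by the standard conjugation on ℂ. Then the quotient real bundle V₊/ℤ₂ over S¹ × ℝP¹ splits as τ ⊕ γ₂ and V₋/ℤ₂ splits as γ₁ ⊕ (γ₁ ⊗ γ₂), where τ is trivial, γ₁ is the pull-back of the Möbius bundle from the first factor, and γ₂ from the second. -/

import Mathlib

/-!
STATEMENT 19 (from the proof of Lemma 2.5). Let `c : S¹ → S¹` be the antipodal involution and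
`V_± → S¹ × S¹` the real bundle pairs over `(S¹ × S¹, id × c)` given by `(I × S¹ × ℂ)/∼` with
`(0,z,v) ∼ (1,z,±v)` and conjugation induced by the standard conjugation of `ℂ` (covering
`id × c`).  Then the quotient real bundle `V₊/ℤ₂` over `S¹ × ℝP¹` splits as `τ ⊕ γ₂` and
`V₋/ℤ₂` splits as `γ₁ ⊕ (γ₁ ⊗ γ₂)`, where `τ` is the trivial line bundle and `γ₁`, `γ₂` are
the pull-backs of the Möbius (tautological) line bundle from the two factors.

Everything is modeled on the universal cover `ℝ²` of the torus: the second circle is `ℝ/ℤ`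
(`z = e^{2πit}`, the antipode `c` being `t ↦ t + 1/2`), so that the base
`S¹ × ℝP¹ = ℝ²/(s ∼ s+1, t ∼ t+1/2)`.  The quotient bundle `V_±/ℤ₂` is the quotient of
`ℝ × ℝ × ℂ` by the clutching relation `(s,t,v) ∼ (s+1,t,±v)` of `V_±`, the fiber periodicity
`(s,t,v) ∼ (s,t+1,v)`, and the conjugation relation `(s,t,v) ∼ (s,t+1/2, v̄)`.  A real line
bundle over `S¹ × ℝP¹` with holonomies `α, β ∈ {±1}` around the two basic loops is the
quotient `L(α,β)` of `ℝ × ℝ × ℝ` by `(s,t,v) ∼ (s+1,t,αv)` and `(s,t,v) ∼ (s,t+1/2,βv)`; thus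
`τ = L(1,1)`, `γ₁ = L(-1,1)`, `γ₂ = L(1,-1)`, `γ₁ ⊗ γ₂ = L(-1,-1)`, and the direct sum
`L(α,β) ⊕ L(α',β')` is the analogous rank 2 quotient `LL(α,β,α',β')` with fiber `ℝ²`.
"Splits as" means: there is a homeomorphism of total spaces commuting with the projections to
the base and linear on each fiber. -/

noncomputable section

/-- the base `S¹ × ℝP¹ = ℝ²/(s ∼ s+1, t ∼ t+1/2)` -/
def BaseRel : (ℝ × ℝ) → (ℝ × ℝ) → Prop := fun p q =>
  q = (p.1 + 1, p.2) ∨ q = (p.1, p.2 + 1 / 2)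

/-- the base space `S¹ × ℝP¹` -/
def Base : Type := Quot BaseRel

instance : TopologicalSpace Base := instTopologicalSpaceQuot

lemma base_shift_one (s t : ℝ) :
    Quot.mk BaseRel (s, t) = Quot.mk BaseRel (s, t + 1) := by
  have a1 : Quot.mk BaseRel (s, t) = Quot.mk BaseRel (s, t + 1 / 2) :=
    Quot.sound (Or.inr rfl)
  have a2 : Quot.mk BaseRel (s, t + 1 / 2) = Quot.mk BaseRel (s, t + 1 / 2 + 1 / 2) :=
    Quot.sound (Or.inr rfl)
  rw [a1, a2]
  congr 2
  ring

/-- total space of the quotient bundle `V_ε/ℤ₂` (`ε = 1` for `V₊`, `ε = -1` for `V₋`):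
the quotient of `ℝ × ℝ × ℂ` by the clutching relation of `V_ε`, the periodicity in the second
circle direction, and the conjugation relation covering the antipodal map -/
def VQRel (ε : ℝ) : (ℝ × ℝ × ℂ) → (ℝ × ℝ × ℂ) → Prop := fun p q =>
  q = (p.1 + 1, p.2.1, (ε : ℂ) * p.2.2) ∨
  q = (p.1, p.2.1 + 1, p.2.2) ∨
  q = (p.1, p.2.1 + 1 / 2, (starRingEnd ℂ) p.2.2)

/-- the total space of `V_ε/ℤ₂` -/
def VQ (ε : ℝ) : Type := Quot (VQRel ε)

instance (ε : ℝ) : TopologicalSpace (VQ ε) := instTopologicalSpaceQuot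

/-- its projection to `S¹ × ℝP¹` -/
def VQproj (ε : ℝ) : VQ ε → Base :=
  Quot.lift (fun p => Quot.mk BaseRel (p.1, p.2.1)) (by
    rintro p q (h | h | h) <;> subst h
    · exact Quot.sound (Or.inl rfl)
    · exact base_shift_one p.1 p.2.1
    · exact Quot.sound (Or.inr rfl))

/-- total space of the sum of line bundles `L(α,β) ⊕ L(α',β')` over `S¹ × ℝP¹`, where `α, α'`
are the holonomies around the `S¹`-factor loop and `β, β'` those around the `ℝP¹`-factor
loop; `τ ⊕ γ₂ = LL 1 1 1 (-1)` and `γ₁ ⊕ (γ₁ ⊗ γ₂) = LL (-1) 1 (-1) (-1)` -/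
def LLRel (α β α' β' : ℝ) : (ℝ × ℝ × (ℝ × ℝ)) → (ℝ × ℝ × (ℝ × ℝ)) → Prop := fun p q =>
  q = (p.1 + 1, p.2.1, (α * p.2.2.1, α' * p.2.2.2)) ∨
  q = (p.1, p.2.1 + 1 / 2, (β * p.2.2.1, β' * p.2.2.2))

/-- the total space of `L(α,β) ⊕ L(α',β')` -/
def LL (α β α' β' : ℝ) : Type := Quot (LLRel α β α' β')

instance (α β α' β' : ℝ) : TopologicalSpace (LL α β α' β') := instTopologicalSpaceQuot

/-- its projection to `S¹ × ℝP¹` -/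
def LLproj (α β α' β' : ℝ) : LL α β α' β' → Base :=
  Quot.lift (fun p => Quot.mk BaseRel (p.1, p.2.1)) (by
    rintro p q (h | h) <;> subst h
    · exact Quot.sound (Or.inl rfl)
    · exact Quot.sound (Or.inr rfl))

/-- `e` is an isomorphism of real vector bundles over `S¹ × ℝP¹`: a homeomorphism of total
spaces commuting with the projections and linear on the fibers -/
def IsBundleIso (ε α β α' β' : ℝ) (e : VQ ε ≃ₜ LL α β α' β') : Prop :=
  (∀ x : VQ ε, LLproj α β α' β' (e x) = VQproj ε x) ∧
  ∀ s t : ℝ, ∃ g : ℂ →ₗ[ℝ] ℝ × ℝ,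
    Function.Bijective g ∧
    ∀ v : ℂ, e (Quot.mk (VQRel ε) (s, t, v)) = Quot.mk (LLRel α β α' β') (s, t, g v)

/-- forward map `v ↦ (Re v, Im v)` -/
def fwd (ε : ℝ) : VQ ε → LL ε 1 ε (-1) :=
  Quot.lift (fun p => Quot.mk (LLRel ε 1 ε (-1)) (p.1, p.2.1, (p.2.2.re, p.2.2.im))) (by
    rintro p q (h | h | h) <;> subst h
    · refine Quot.sound (Or.inl ?_)
      simp [Complex.mul_re, Complex.mul_im]
    · have a1 : Quot.mk (LLRel ε 1 ε (-1)) (p.1, p.2.1, (p.2.2.re, p.2.2.im)) =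
          Quot.mk (LLRel ε 1 ε (-1)) (p.1, p.2.1 + 1 / 2, (p.2.2.re, -p.2.2.im)) := by
        refine Quot.sound (Or.inr ?_)
        simp
      have a2 : Quot.mk (LLRel ε 1 ε (-1)) (p.1, p.2.1 + 1 / 2, (p.2.2.re, -p.2.2.im)) =
          Quot.mk (LLRel ε 1 ε (-1)) (p.1, p.2.1 + 1 / 2 + 1 / 2, (p.2.2.re, p.2.2.im)) := by
        refine Quot.sound (Or.inr ?_)
        simp
      dsimp only
      rw [a1, a2, show p.2.1 + 1 / 2 + 1 / 2 = p.2.1 + 1 by ring]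
    · refine Quot.sound (Or.inr ?_)
      simp)

/-- backward map `(x, y) ↦ x + y i` -/
def bwd (ε : ℝ) : LL ε 1 ε (-1) → VQ ε :=
  Quot.lift (fun p => Quot.mk (VQRel ε) (p.1, p.2.1, (⟨p.2.2.1, p.2.2.2⟩ : ℂ))) (by
    rintro p q (h | h) <;> subst h
    · refine Quot.sound (Or.inl ?_)
      refine Prod.ext rfl (Prod.ext rfl ?_)
      apply Complex.ext <;> simp [Complex.mul_re, Complex.mul_im]
    · refine Quot.sound (Or.inr (Or.inr ?_))
      refine Prod.ext rfl (Prod.ext rfl ?_)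
      apply Complex.ext <;> simp)

lemma continuous_fwd (ε : ℝ) : Continuous (fwd ε) := by
  apply continuous_quot_lift
  exact (continuous_quot_mk).comp (by fun_prop)

lemma continuous_bwd (ε : ℝ) : Continuous (bwd ε) := by
  apply continuous_quot_lift
  refine (continuous_quot_mk).comp ?_
  refine continuous_fst.prodMk (continuous_fst.comp continuous_snd |>.prodMk ?_)
  have h : (fun p : ℝ × ℝ × (ℝ × ℝ) => (⟨p.2.2.1, p.2.2.2⟩ : ℂ)) =
      fun p : ℝ × ℝ × (ℝ × ℝ) => (p.2.2.1 : ℂ) + (p.2.2.2 : ℂ) * Complex.I := by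
    funext p
    apply Complex.ext <;> simp
  exact h ▸ (by fun_prop)

/-- the bundle isomorphism `V_ε/ℤ₂ ≅ L(ε,1) ⊕ L(ε,-1)` -/
def isoVL (ε : ℝ) : VQ ε ≃ₜ LL ε 1 ε (-1) where
  toFun := fwd ε
  invFun := bwd ε
  left_inv := by
    refine Quot.ind (fun p => ?_)
    rfl
  right_inv := by
    refine Quot.ind (fun p => ?_)
    rfl
  continuous_toFun := continuous_fwd ε
  continuous_invFun := continuous_bwd ε

lemma isoVL_isBundleIso (ε : ℝ) : IsBundleIso ε ε 1 ε (-1) (isoVL ε) := by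
  constructor
  · refine Quot.ind (fun p => ?_)
    rfl
  · intro s t
    refine ⟨Complex.equivRealProdLm.toLinearMap, Complex.equivRealProdLm.bijective, ?_⟩
    intro v
    rfl

/-- **Splitting of the quotient bundles `V_±/ℤ₂`** (proof of Lemma 2.5):
`V₊/ℤ₂ ≅ τ ⊕ γ₂` and `V₋/ℤ₂ ≅ γ₁ ⊕ (γ₁ ⊗ γ₂)` as real vector bundles over `S¹ × ℝP¹`. -/
theorem stmt19 :
    (∃ e : VQ 1 ≃ₜ LL 1 1 1 (-1), IsBundleIso 1 1 1 1 (-1) e) ∧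
    (∃ e : VQ (-1) ≃ₜ LL (-1) 1 (-1) (-1), IsBundleIso (-1) (-1) 1 (-1) (-1) e) := by
  exact ⟨⟨isoVL 1, isoVL_isBundleIso 1⟩, ⟨isoVL (-1), isoVL_isBundleIso (-1)⟩⟩

end
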